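/- Let u : ℝ² → ℝ be a smooth function of (x,t). Define f₁₁ = cos(u/2), f₁₂ = cos(u/2), f₂₁ = sin(u/2), f₂₂ = −sin(u/2), f₃₁ = u_x/2, f₃₂ = −u_t/2. Then the first two structure-equation identities ∂_x f₁₂ − ∂_t f₁₁ = f₃₁f₂₂ − f₃₂f₂₁ and ∂_x f₂₂ − ∂_t f₂₁ = f₁₁f₃₂ − f₁₂f₃₁ hold identically for every smooth u, while the third identity ∂_x f₃₂ − ∂_t f₃₁ = f₁₁f₂₂ − f₁₂f₂₁ holds at a point if and only if u_{xt} = sin u at that point. Hence the 1-forms ω¹ = cos(u/2)(dx+dt), ω² = sin(u/2)(dx−dt), ω³ = (u_x/2)dx − (u_t/2)dt satisfy the structure equations exactly when u is a solution of the sine-Gordon equation u_{xt} = sin u. -/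

import Mathlib

/-- for `f₁₁ = f₁₂ = cos(u/2)`, `f₂₁ = sin(u/2)`, `f₂₂ = -sin(u/2)`,
`f₃₁ = u_x/2`, `f₃₂ = -u_t/2`, the first two structure-equation identities hold for every
smooth `u`, while the third holds at a point if and only if `u_{xt} = sin u` there. -/
theorem sine_gordon_second_family
    (u : ℝ → ℝ → ℝ)
    (hu : ContDiff ℝ (⊤ : ℕ∞) (fun p : ℝ × ℝ => u p.1 p.2)) :
    (∀ x t : ℝ,
      deriv (fun s => Real.cos (u s t / 2)) x - deriv (fun s => Real.cos (u x s / 2)) t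
        = deriv (fun s => u s t) x / 2 * (-Real.sin (u x t / 2))
          - (-(deriv (fun s => u x s) t) / 2) * Real.sin (u x t / 2)) ∧
    (∀ x t : ℝ,
      deriv (fun s => -Real.sin (u s t / 2)) x - deriv (fun s => Real.sin (u x s / 2)) t
        = Real.cos (u x t / 2) * (-(deriv (fun s => u x s) t) / 2)
          - Real.cos (u x t / 2) * (deriv (fun s => u s t) x / 2)) ∧
    (∀ x t : ℝ,
      (deriv (fun s => -(deriv (fun r => u s r) t) / 2) x
          - deriv (fun s => deriv (fun r => u r s) x / 2) t
          = Real.cos (u x t / 2) * (-Real.sin (u x t / 2))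
            - Real.cos (u x t / 2) * Real.sin (u x t / 2))
        ↔ deriv (fun s => deriv (fun r => u r s) x) t = Real.sin (u x t)) := by
  set F : ℝ × ℝ → ℝ := fun p => u p.1 p.2 with hFdef
  have hdF : Differentiable ℝ F := hu.differentiable (by simp)
  have hF' : ContDiff ℝ (⊤ : ℕ∞) (fderiv ℝ F) := hu.fderiv_right (by simp)
  have hdF' : Differentiable ℝ (fderiv ℝ F) := hF'.differentiable (by simp)
  have hline1 : ∀ (x t : ℝ), HasDerivAt (fun s : ℝ => (s, t)) ((1:ℝ), (0:ℝ)) x := by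
    intro x t
    exact (hasDerivAt_id x).prodMk (hasDerivAt_const x t)
  have hline2 : ∀ (x t : ℝ), HasDerivAt (fun s : ℝ => (x, s)) ((0:ℝ), (1:ℝ)) t := by
    intro x t
    exact (hasDerivAt_const t x).prodMk (hasDerivAt_id t)
  have hA : ∀ x t : ℝ, HasDerivAt (fun s => u s t) (fderiv ℝ F (x, t) (1, 0)) x := by
    intro x t
    exact (hdF (x, t)).hasFDerivAt.comp_hasDerivAt x (hline1 x t)
  have hB : ∀ x t : ℝ, HasDerivAt (fun s => u x s) (fderiv ℝ F (x, t) (0, 1)) t := by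
    intro x t
    exact (hdF (x, t)).hasFDerivAt.comp_hasDerivAt t (hline2 x t)
  have hC : ∀ x t : ℝ, HasDerivAt (fun s => fderiv ℝ F (s, t) ((0:ℝ), (1:ℝ)))
      (fderiv ℝ (fderiv ℝ F) (x, t) (1, 0) (0, 1)) x := by
    intro x t
    have h2 : HasDerivAt (fun s : ℝ => fderiv ℝ F (s, t))
        (fderiv ℝ (fderiv ℝ F) (x, t) (1, 0)) x :=
      (hdF' (x, t)).hasFDerivAt.comp_hasDerivAt x (hline1 x t)
    simpa using h2.clm_apply (hasDerivAt_const x ((0:ℝ), (1:ℝ)))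
  have hD : ∀ x t : ℝ, HasDerivAt (fun s => fderiv ℝ F (x, s) ((1:ℝ), (0:ℝ)))
      (fderiv ℝ (fderiv ℝ F) (x, t) (0, 1) (1, 0)) t := by
    intro x t
    have h2 : HasDerivAt (fun s : ℝ => fderiv ℝ F (x, s))
        (fderiv ℝ (fderiv ℝ F) (x, t) (0, 1)) t :=
      (hdF' (x, t)).hasFDerivAt.comp_hasDerivAt t (hline2 x t)
    simpa using h2.clm_apply (hasDerivAt_const t ((1:ℝ), (0:ℝ)))
  have hsymm : ∀ x t : ℝ, fderiv ℝ (fderiv ℝ F) (x, t) (1, 0) (0, 1)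
      = fderiv ℝ (fderiv ℝ F) (x, t) (0, 1) (1, 0) := fun x t =>
    second_derivative_symmetric (fun y => (hdF y).hasFDerivAt) ((hdF' (x, t)).hasFDerivAt) _ _
  refine ⟨?_, ?_, ?_⟩
  · intro x t
    rw [(hA x t).deriv, (hB x t).deriv,
      (((hA x t).div_const 2).cos).deriv, (((hB x t).div_const 2).cos).deriv]
    ring
  · intro x t
    rw [(hA x t).deriv, (hB x t).deriv,
      ((((hA x t).div_const 2).sin).fun_neg).deriv, (((hB x t).div_const 2).sin).deriv]
    ring
  · intro x t
    have e1 : (fun s => -(deriv (fun r => u s r) t) / 2)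
        = fun s => -(fderiv ℝ F (s, t) (0, 1)) / 2 := by
      funext s; rw [(hB s t).deriv]
    have e2 : (fun s => deriv (fun r => u r s) x / 2)
        = fun s => fderiv ℝ F (x, s) (1, 0) / 2 := by
      funext s; rw [(hA x s).deriv]
    have e3 : (fun s => deriv (fun r => u r s) x)
        = fun s => fderiv ℝ F (x, s) (1, 0) := by
      funext s; rw [(hA x s).deriv]
    rw [e1, e2, e3, (((hC x t).fun_neg).div_const 2).deriv, ((hD x t).div_const 2).deriv,
      (hD x t).deriv, hsymm x t]
    have hs : Real.sin (u x t) = 2 * Real.sin (u x t / 2) * Real.cos (u x t / 2) := by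
      rw [← Real.sin_two_mul]; congr 1; ring
    rw [hs]
    constructor <;> intro h <;> linarith
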